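/- arXiv:2007.05438 — 2 statements merged into one kernel-verified Lean document; each statement's English description precedes it below -/
import Mathlib

section
/- Let W be a random variable with values in [0,1] such that q_0 := P(W = 1) > 0, let m ≥ 1, suppose E[W] > 0, and set θ = 1 + E[W]/m. Define p(k) = E[((θ−1)/(θ−1+W))·(W/(θ−1+W))^k] for k ∈ ℕ_0. Then θ^k · p(k) → q_0 (1 − θ^{-1}) as k → ∞. -/
open MeasureTheory ProbabilityTheory Filter Topology

/-- For a `[0,1]`-valued weight `W` with an atom `q₀ = P(W = 1) > 0` at `1`, positive mean,
`θ = 1 + E[W]/m`, and `p(k) = E[((θ-1)/(θ-1+W)) (W/(θ-1+W))^k]`, one has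
`θ^k p(k) → q₀ (1 - θ⁻¹)` as `k → ∞`. -/
theorem stmt5 {Ω : Type*} [MeasureSpace Ω] [IsProbabilityMeasure (ℙ : Measure Ω)]
    (W : Ω → ℝ) (hW : Measurable W) (hrange : ∀ᵐ ω ∂ℙ, W ω ∈ Set.Icc (0:ℝ) 1)
    (q₀ : ℝ) (hq₀ : q₀ = (ℙ {ω | W ω = 1}).toReal) (hq₀pos : 0 < q₀)
    (m : ℕ) (hm : 1 ≤ m)
    (hmean : 0 < ∫ ω, W ω ∂ℙ)
    (θ : ℝ) (hθ : θ = 1 + (∫ ω, W ω ∂ℙ) / m)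
    (p : ℕ → ℝ)
    (hp : ∀ k, p k = ∫ ω, ((θ - 1) / (θ - 1 + W ω)) * (W ω / (θ - 1 + W ω)) ^ k ∂ℙ) :
    Tendsto (fun k : ℕ => θ ^ k * p k) atTop (𝓝 (q₀ * (1 - θ⁻¹))) := by
  have hm0 : (0:ℝ) < (m:ℝ) := by exact_mod_cast Nat.lt_of_lt_of_le Nat.zero_lt_one hm
  have hc : 0 < θ - 1 := by
    rw [hθ]; have h := div_pos hmean hm0; linarith
  have hθpos : 0 < θ := by linarith
  have hθne : θ ≠ 0 := ne_of_gt hθpos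
  have hs : MeasurableSet {ω | W ω = 1} := hW (measurableSet_singleton 1)
  set F : ℕ → Ω → ℝ := fun k ω => ((θ - 1) / (θ - 1 + W ω)) * (θ * W ω / (θ - 1 + W ω)) ^ k
    with hF
  set g : Ω → ℝ := fun ω => Set.indicator {ω | W ω = 1} (fun _ => 1 - θ⁻¹) ω with hg
  have key : Tendsto (fun k => ∫ ω, F k ω ∂ℙ) atTop (𝓝 (∫ ω, g ω ∂ℙ)) := by
    apply tendsto_integral_of_dominated_convergence (fun _ => (1:ℝ))
    · intro k
      apply Measurable.aestronglyMeasurable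
      fun_prop
    · exact integrable_const 1
    · intro k
      filter_upwards [hrange] with ω hω
      obtain ⟨h0, h1⟩ := hω
      have hd : 0 < θ - 1 + W ω := by linarith
      have ha0 : 0 ≤ (θ - 1) / (θ - 1 + W ω) := by positivity
      have ha1 : (θ - 1) / (θ - 1 + W ω) ≤ 1 := by
        rw [div_le_one hd]; linarith
      have hr0 : 0 ≤ θ * W ω / (θ - 1 + W ω) := by positivity
      have hr1 : θ * W ω / (θ - 1 + W ω) ≤ 1 := by
        rw [div_le_one hd]; nlinarith
      have hrk : (θ * W ω / (θ - 1 + W ω)) ^ k ≤ 1 := pow_le_one₀ hr0 hr1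
      have hFnn : 0 ≤ F k ω := by
        simp only [hF]; positivity
      rw [Real.norm_eq_abs, abs_of_nonneg hFnn]
      calc F k ω ≤ 1 * 1 := by
            simp only [hF]
            exact mul_le_mul ha1 hrk (by positivity) zero_le_one
        _ = 1 := by ring
    · filter_upwards [hrange] with ω hω
      obtain ⟨h0, h1⟩ := hω
      have hd : 0 < θ - 1 + W ω := by linarith
      rcases eq_or_lt_of_le h1 with heq | hlt
      · -- W ω = 1
        have hg1 : g ω = 1 - θ⁻¹ := Set.indicator_of_mem heq (fun _ => 1 - θ⁻¹)
        have hd1 : θ - 1 + W ω = θ := by rw [heq]; ring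
        have hFval : ∀ k, F k ω = 1 - θ⁻¹ := by
          intro k
          simp only [hF, hd1, heq, mul_one, div_self hθne, one_pow]
          field_simp
          rw [sub_add_cancel, div_self hθne, one_pow, mul_one]
        simp only [hFval, hg1]
        exact tendsto_const_nhds
      · have hg0 : g ω = 0 := Set.indicator_of_notMem (ne_of_lt hlt) (fun _ => 1 - θ⁻¹)
        have hr0 : 0 ≤ θ * W ω / (θ - 1 + W ω) := by positivity
        have hrlt : θ * W ω / (θ - 1 + W ω) < 1 := by
          rw [div_lt_one hd]; nlinarith
        have := (tendsto_pow_atTop_nhds_zero_of_lt_one hr0 hrlt).const_mul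
          ((θ - 1) / (θ - 1 + W ω))
        rw [mul_zero] at this
        rw [hg0]
        exact this
  have hint : ∫ ω, g ω ∂ℙ = q₀ * (1 - θ⁻¹) := by
    rw [hg, integral_indicator_const _ hs, hq₀, smul_eq_mul]
    rfl
  have heqF : ∀ k, θ ^ k * p k = ∫ ω, F k ω ∂ℙ := by
    intro k
    rw [hp, ← integral_const_mul]
    congr 1; funext ω
    simp only [hF]
    rw [mul_div_assoc θ, mul_pow]
    ring
  rw [← hint]
  exact key.congr (fun k => (heqF k).symm)
end

section
/- Let α > 1 and let ν be the measure on (0,1) × (0,∞) given by ν(dt, df) = dt × (α−1)f^{−α} df. Then for every x > 0, ν({(t,f) : f·log(1/t) > x}) = Γ(α)·x^{−(α−1)}. Consequently, for a Poisson point process Π with intensity ν, P(max_{(t,f)∈Π} f·log(1/t) ≤ x) = exp(−Γ(α)x^{−(α−1)}), i.e. the maximum is Fréchet distributed with shape α−1 and scale Γ(α)^{1/(α−1)}. -/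
open MeasureTheory Filter Topology

lemma aux_img : (fun u : ℝ => Real.exp (-u)) '' (Set.Ioi 0) = Set.Ioo 0 1 := by
  ext y
  constructor
  · rintro ⟨u, hu, rfl⟩
    exact ⟨Real.exp_pos _, by simpa using Real.exp_lt_one_iff.2 (neg_neg_iff_pos.2 hu)⟩
  · rintro ⟨h0, h1⟩
    exact ⟨-Real.log y, by simpa using Real.log_neg h0 h1, by simp [Real.exp_log h0]⟩

lemma aux_deriv : ∀ u ∈ Set.Ioi (0:ℝ), HasDerivWithinAt (fun u => Real.exp (-u))
    (-Real.exp (-u)) (Set.Ioi 0) u := by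
  intro u _
  simpa [Function.comp_def] using ((Real.hasDerivAt_exp (-u)).comp u (hasDerivAt_neg u)).hasDerivWithinAt

lemma aux_inj : Set.InjOn (fun u : ℝ => Real.exp (-u)) (Set.Ioi 0) := by
  intro a _ b _ h
  simpa using Real.exp_injective h

lemma aux_gamma (α : ℝ) (hα : 1 < α) :
    ∫ t in Set.Ioo (0:ℝ) 1, (-Real.log t) ^ (α - 1) = Real.Gamma α := by
  rw [← aux_img, integral_image_eq_integral_abs_deriv_smul measurableSet_Ioi aux_deriv aux_inj]
  rw [Real.Gamma_eq_integral (by linarith : (0:ℝ) < α)]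
  refine setIntegral_congr_fun measurableSet_Ioi fun u hu => ?_
  simp [abs_of_pos (Real.exp_pos (-u)), Real.log_exp, smul_eq_mul]

lemma aux_integrable (α : ℝ) (hα : 1 < α) :
    IntegrableOn (fun t => (-Real.log t) ^ (α - 1)) (Set.Ioo (0:ℝ) 1) := by
  rw [← aux_img,
    integrableOn_image_iff_integrableOn_abs_deriv_smul measurableSet_Ioi aux_deriv aux_inj]
  have := Real.GammaIntegral_convergent (by linarith : (0:ℝ) < α)
  refine this.congr_fun (fun u hu => ?_) measurableSet_Ioi
  simp [abs_of_pos (Real.exp_pos (-u)), Real.log_exp, smul_eq_mul]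

lemma aux_tail (α : ℝ) (hα : 1 < α) {c : ℝ} (hc : 0 < c) :
    ∫⁻ f in Set.Ioi c, ENNReal.ofReal ((α - 1) * f ^ (-α)) =
      ENNReal.ofReal (c ^ (-(α - 1))) := by
  have hint : IntegrableOn (fun f : ℝ => (α - 1) * f ^ (-α)) (Set.Ioi c) :=
    (integrableOn_Ioi_rpow_of_lt (by linarith : -α < -1) hc).const_mul (α - 1)
  rw [← ofReal_integral_eq_lintegral_ofReal hint]
  · rw [integral_const_mul, integral_Ioi_rpow_of_lt (by linarith : -α < -1) hc]
    congr 1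
    rw [Real.rpow_neg hc.le]
    have h1 : -α + 1 = -(α - 1) := by ring
    rw [h1, Real.rpow_neg hc.le]
    field_simp
    exact div_self (by linarith : (0:ℝ) < α - 1).ne'
  · filter_upwards [ae_restrict_mem measurableSet_Ioi] with f hf
    exact mul_nonneg (by linarith) (Real.rpow_nonneg (le_of_lt (hc.trans hf)) _)

/-- For `α > 1` and the measure `ν(dt, df) = dt × (α-1) f^{-α} df` on `(0,1) × (0,∞)`:
for every `x > 0`, `ν({(t,f) : f log(1/t) > x}) = Γ(α) x^{-(α-1)}`, and consequently
`exp(-ν({(t,f) : f log(1/t) > x})) = exp(-Γ(α) x^{-(α-1)})`, the Fréchet distribution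
function with shape `α-1` and scale `Γ(α)^{1/(α-1)}`. -/
theorem stmt17 (α : ℝ) (hα : 1 < α)
    (ν : Measure (ℝ × ℝ))
    (hν : ν = (volume.restrict (Set.Ioo (0:ℝ) 1)).prod
        ((volume.restrict (Set.Ioi (0:ℝ))).withDensity
          (fun f => ENNReal.ofReal ((α - 1) * f ^ (-α))))) :
    ∀ x : ℝ, 0 < x →
      ν {q : ℝ × ℝ | x < q.2 * Real.log (1 / q.1)} =
        ENNReal.ofReal (Real.Gamma α * x ^ (-(α - 1))) ∧
      Real.exp (-(ν {q : ℝ × ℝ | x < q.2 * Real.log (1 / q.1)}).toReal) =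
        Real.exp (-(Real.Gamma α * x ^ (-(α - 1)))) := by
  intro x hx
  set μ₂ := (volume.restrict (Set.Ioi (0:ℝ))).withDensity
      (fun f => ENNReal.ofReal ((α - 1) * f ^ (-α))) with hμ₂
  have hSmeas : MeasurableSet {q : ℝ × ℝ | x < q.2 * Real.log (1 / q.1)} :=
    measurableSet_lt measurable_const
      (measurable_snd.mul ((Real.measurable_log.comp (measurable_const.div measurable_fst))))
  have key : ν {q : ℝ × ℝ | x < q.2 * Real.log (1 / q.1)} =
      ENNReal.ofReal (Real.Gamma α * x ^ (-(α - 1))) := by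
    rw [hν, Measure.prod_apply hSmeas]
    have hstep : ∀ t ∈ Set.Ioo (0:ℝ) 1,
        μ₂ (Prod.mk t ⁻¹' {q : ℝ × ℝ | x < q.2 * Real.log (1 / q.1)}) =
          ENNReal.ofReal (x ^ (-(α - 1)) * (-Real.log t) ^ (α - 1)) := by
      intro t ht
      have hL : 0 < -Real.log t := by
        simpa using Real.log_neg ht.1 ht.2
      have hset : (Prod.mk t ⁻¹' {q : ℝ × ℝ | x < q.2 * Real.log (1 / q.1)}) =
          Set.Ioi (x / (-Real.log t)) := by
        ext f
        simp only [Set.mem_preimage, Set.mem_setOf_eq, Set.mem_Ioi, one_div, Real.log_inv]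
        rw [div_lt_iff₀ hL]
      have hcpos : 0 < x / (-Real.log t) := div_pos hx hL
      rw [hset, hμ₂, withDensity_apply _ measurableSet_Ioi,
        Measure.restrict_restrict measurableSet_Ioi,
        Set.Ioi_inter_Ioi, sup_eq_left.mpr hcpos.le, aux_tail α hα hcpos]
      congr 1
      rw [Real.div_rpow hx.le hL.le, Real.rpow_neg hL.le, div_inv_eq_mul]
    rw [setLIntegral_congr_fun measurableSet_Ioo hstep]
    have hint : IntegrableOn (fun t => x ^ (-(α - 1)) * (-Real.log t) ^ (α - 1))
        (Set.Ioo (0:ℝ) 1) := (aux_integrable α hα).const_mul _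
    rw [← ofReal_integral_eq_lintegral_ofReal hint]
    · rw [integral_const_mul, aux_gamma α hα, mul_comm]
    · filter_upwards [ae_restrict_mem measurableSet_Ioo] with t ht
      exact mul_nonneg (Real.rpow_nonneg hx.le _)
        (Real.rpow_nonneg (by simpa using (Real.log_neg ht.1 ht.2).le) _)
  refine ⟨key, ?_⟩
  rw [key, ENNReal.toReal_ofReal]
  exact mul_nonneg ((Real.Gamma_pos_of_pos (by linarith)).le) (Real.rpow_nonneg hx.le _)
end
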